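/- Let r ≥ 2 and 0 ≤ α ≤ 1 - 1/r, and let n ≥ 1. Then λ_α(T_{n,r}) ≤ (1 - 1/r)·n, where T_{n,r} is the Turán graph and λ_α denotes the largest eigenvalue of A_α = α·D + (1-α)·A. -/

import Mathlib

open Finset Matrix

noncomputable def Aalpha {V : Type*} [Fintype V] [DecidableEq V]
    (G : SimpleGraph V) [DecidableRel G.Adj] (α : ℝ) : Matrix V V ℝ :=
  α • Matrix.diagonal (fun v => (G.degree v : ℝ)) + (1 - α) • G.adjMatrix ℝ

noncomputable def lamAlpha {V : Type*} [Fintype V] [DecidableEq V]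
    (G : SimpleGraph V) [DecidableRel G.Adj] (α : ℝ) : ℝ :=
  sSup (spectrum ℝ (Aalpha G α))

-- tangent line trick for f(x) = x/(q+x) at m
lemma tangent (q xx m D : ℝ) (hq : 0 ≤ q) (hx : 0 ≤ xx) (hm : 0 < m) (hD : D = q + m) :
    xx / (q + xx) ≤ m / D + q * (xx - m) / D ^ 2 := by
  have hD0 : 0 < D := by rw [hD]; linarith
  rcases eq_or_lt_of_le (by linarith : (0:ℝ) ≤ q + xx) with h | h
  · have hq0 : q = 0 := by linarith
    have hx0 : xx = 0 := by linarith
    simp [hq0, hx0, le_div_iff₀ hD0, hm.le]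
  · rw [div_add_div _ _ (ne_of_gt hD0) (by positivity : (D:ℝ)^2 ≠ 0), div_le_div_iff₀ h (by positivity)]
    subst hD
    nlinarith [mul_nonneg hq (sq_nonneg (xx - m)), sq_nonneg (xx - m)]

lemma core (r : ℕ) (hr : 2 ≤ r) (n : ℝ) (hn : 1 ≤ n) (α : ℝ) (h0 : 0 ≤ α)
    (h1 : α ≤ 1 - 1 / r) (N s t : ℕ → ℝ) (hN0 : ∀ i, 0 ≤ N i)
    (hNsum : ∑ i ∈ range r, N i = n) (ht : ∀ i, 0 ≤ t i)
    (hst : ∀ i ∈ range r, s i ^ 2 ≤ N i * t i) :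
    (1 - α) * (∑ i ∈ range r, s i) ^ 2 ≤
      ∑ i ∈ range r, ((1 - 1/r - α) * n * t i + α * N i * t i + (1 - α) * s i ^ 2) := by
  have hr0 : (0:ℝ) < r := by positivity
  have hrr : (1:ℝ)/r ≤ 1/2 := by
    rw [div_le_div_iff₀ hr0 (by norm_num)]
    have : (2:ℝ) ≤ r := by exact_mod_cast hr
    linarith
  set β : ℝ := 1 - 1/r - α with hβdef
  have hβ : 0 ≤ β := by rw [hβdef]; linarith
  have hα1 : 0 < 1 - α := by
    have h2 : (0:ℝ) < 1/r := by positivity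
    linarith
  have hn0 : (0:ℝ) < n := by linarith
  set w : ℕ → ℝ := fun i => N i / (β * n + N i) with hw
  set g : ℕ → ℝ := fun i => (β * n + N i) * s i ^ 2 / N i with hg
  have hwnn : ∀ i ∈ range r, 0 ≤ w i := fun i _ =>
    div_nonneg (hN0 i) (by have := hN0 i; nlinarith)
  have hgnn : ∀ i ∈ range r, 0 ≤ g i := fun i _ =>
    div_nonneg (mul_nonneg (by have := hN0 i; nlinarith) (sq_nonneg _)) (hN0 i)
  have hs0 : ∀ i ∈ range r, N i = 0 → s i = 0 := by
    intro i hi hNi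
    have := hst i hi
    rw [hNi, zero_mul] at this
    exact pow_eq_zero_iff (n := 2) (by norm_num) |>.mp (le_antisymm this (sq_nonneg _))
  -- Cauchy–Schwarz
  have hCS : (∑ i ∈ range r, s i) ^ 2 ≤ (∑ i ∈ range r, w i) * ∑ i ∈ range r, g i := by
    apply Finset.sum_sq_le_sum_mul_sum_of_sq_eq_mul _ hwnn hgnn
    intro i hi
    rcases eq_or_lt_of_le (hN0 i) with hNi | hNi
    · rw [hs0 i hi hNi.symm]
      simp [hw, hg, ← hNi]
    · have hden : 0 < β * n + N i := by nlinarith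
      simp only [hw, hg]
      rw [div_mul_div_comm, eq_div_iff (mul_pos hden hNi).ne']
      ring
  -- Jensen: ∑ w ≤ 1/(1-α)
  have hJ : ∑ i ∈ range r, w i ≤ 1 / (1 - α) := by
    have htan : ∀ i ∈ range r, w i ≤ (n/r) / (n * (1-α)) + (β*n) * (N i - n/r) / (n * (1-α))^2 := by
      intro i hi
      exact tangent (β*n) (N i) (n/r) (n*(1-α)) (by positivity) (hN0 i) (by positivity)
        (by rw [hβdef]; ring)
    calc ∑ i ∈ range r, w i ≤ ∑ i ∈ range r, ((n/r) / (n * (1-α)) + (β*n) * (N i - n/r) / (n * (1-α))^2) :=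
          Finset.sum_le_sum htan
      _ = r * ((n/r) / (n * (1-α))) + (β*n) * ((∑ i ∈ range r, N i) - r * (n/r)) / (n * (1-α))^2 := by
          rw [Finset.sum_add_distrib, Finset.sum_const, card_range, nsmul_eq_mul]
          congr 1
          rw [← Finset.sum_div, ← Finset.mul_sum, Finset.sum_sub_distrib, Finset.sum_const,
            card_range, nsmul_eq_mul]
      _ = 1 / (1 - α) := by
          rw [hNsum]
          field_simp
          ring
  -- per-term bound: g i ≤ term i
  have hterm : ∀ i ∈ range r, g i ≤ β * n * t i + α * N i * t i + (1 - α) * s i ^ 2 := by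
    intro i hi
    rcases eq_or_lt_of_le (hN0 i) with hNi | hNi
    · have hgi : g i = 0 := by simp [hg, ← hNi, hs0 i hi hNi.symm]
      rw [hgi, hs0 i hi hNi.symm, ← hNi]
      have := ht i
      nlinarith [mul_nonneg (mul_nonneg hβ hn0.le) (ht i)]
    · have hti : s i ^ 2 / N i ≤ t i := (div_le_iff₀ hNi).2 (by linarith [hst i hi, mul_comm (N i) (t i)])
      have hgi : g i = (β * n + α * N i) * (s i ^ 2 / N i) + (1 - α) * s i ^ 2 := by
        have e : N i * (s i ^ 2 / N i) = s i ^ 2 := by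
          rw [← mul_div_assoc]; exact mul_div_cancel_left₀ _ hNi.ne'
        simp only [hg, mul_div_assoc]
        linear_combination (1 - α) * e
      rw [hgi]
      have hco : 0 ≤ β * n + α * N i := by nlinarith
      nlinarith [mul_le_mul_of_nonneg_left hti hco]
  have hgsum : 0 ≤ ∑ i ∈ range r, g i := Finset.sum_nonneg hgnn
  calc (1 - α) * (∑ i ∈ range r, s i) ^ 2
      ≤ (1 - α) * ((∑ i ∈ range r, w i) * ∑ i ∈ range r, g i) := by
        exact mul_le_mul_of_nonneg_left hCS hα1.le
    _ ≤ (1 - α) * ((1 / (1 - α)) * ∑ i ∈ range r, g i) := by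
        apply mul_le_mul_of_nonneg_left _ hα1.le
        exact mul_le_mul_of_nonneg_right hJ hgsum
    _ = ∑ i ∈ range r, g i := by field_simp
    _ ≤ ∑ i ∈ range r, (β * n * t i + α * N i * t i + (1 - α) * s i ^ 2) := Finset.sum_le_sum hterm
    _ = ∑ i ∈ range r, ((1 - 1/r - α) * n * t i + α * N i * t i + (1 - α) * s i ^ 2) := by rfl

lemma quad_expand {V : Type*} [Fintype V] [DecidableEq V]
    (G : SimpleGraph V) [DecidableRel G.Adj] (α : ℝ) (x : V → ℝ) :
    x ⬝ᵥ (Aalpha G α *ᵥ x) =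
      ∑ v, ∑ w, (if G.Adj v w then α * x v ^ 2 + (1 - α) * (x v * x w) else 0) := by
  have hdeg : ∀ v, ((G.degree v : ℝ)) = ∑ w, (if G.Adj v w then (1:ℝ) else 0) := by
    intro v
    rw [show G.degree v = (G.neighborFinset v).card from rfl,
      SimpleGraph.neighborFinset_eq_filter, Finset.card_filter]
    push_cast
    simp [Finset.sum_ite]
  simp only [dotProduct, Aalpha, mulVec, Matrix.add_apply, Matrix.smul_apply, diagonal_apply,
    SimpleGraph.adjMatrix_apply, smul_eq_mul, dotProduct]
  refine Finset.sum_congr rfl fun v _ => ?_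
  calc x v * ∑ w, ((α * if v = w then (G.degree v:ℝ) else 0) +
        (1 - α) * if G.Adj v w then 1 else 0) * x w
      = ∑ w, (α * (if v = w then (G.degree v:ℝ) * (x v * x v) else 0) +
          (1 - α) * (if G.Adj v w then x v * x w else 0)) := by
        rw [Finset.mul_sum]
        refine Finset.sum_congr rfl fun u _ => ?_
        rcases eq_or_ne v u with h | h
        · subst h; rw [if_pos rfl, if_pos rfl]; split_ifs <;> ring
        · rw [if_neg h, if_neg h]; split_ifs <;> ring
    _ = α * ((G.degree v:ℝ) * (x v * x v)) +
          (1 - α) * ∑ w, (if G.Adj v w then x v * x w else 0) := by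
        rw [Finset.sum_add_distrib, ← Finset.mul_sum, ← Finset.mul_sum, Finset.sum_ite_eq]
        simp
    _ = ∑ w, (if G.Adj v w then α * x v ^ 2 + (1 - α) * (x v * x w) else 0) := by
        rw [hdeg v, Finset.sum_mul, Finset.mul_sum, Finset.mul_sum, ← Finset.sum_add_distrib]
        refine Finset.sum_congr rfl fun u _ => ?_
        split_ifs <;> ring

lemma turan_quad (r n : ℕ) (hr : 2 ≤ r) (hn : 1 ≤ n) (α : ℝ) (h0 : 0 ≤ α)
    (h1 : α ≤ 1 - 1 / r) (x : Fin n → ℝ) :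
    x ⬝ᵥ (Aalpha (SimpleGraph.turanGraph n r) α *ᵥ x) ≤ (1 - 1/(r:ℝ)) * n * (x ⬝ᵥ x) := by
  have hr0 : 0 < r := by omega
  have hfib : ∀ f : Fin n → ℝ,
      ∑ i ∈ range r, ∑ v ∈ univ.filter (fun v : Fin n => (v : ℕ) % r = i), f v = ∑ v, f v := by
    intro f
    exact Finset.sum_fiberwise_of_maps_to (fun v _ => mem_range.2 (Nat.mod_lt _ hr0)) f
  have hmem : ∀ i, ∀ v ∈ univ.filter (fun v : Fin n => (v : ℕ) % r = i), (v : ℕ) % r = i := by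
    intro i v hv; simpa using hv
  -- expansion
  have key : x ⬝ᵥ (Aalpha (SimpleGraph.turanGraph n r) α *ᵥ x) =
      (α * n * (∑ v, x v ^ 2) + (1 - α) * (∑ v, x v) ^ 2) -
        ∑ i ∈ range r, (α * ((univ.filter (fun v : Fin n => (v : ℕ) % r = i)).card : ℝ) *
            (∑ v ∈ univ.filter (fun v : Fin n => (v : ℕ) % r = i), x v ^ 2) +
          (1 - α) * (∑ v ∈ univ.filter (fun v : Fin n => (v : ℕ) % r = i), x v) ^ 2) := by
    rw [quad_expand]
    have hrow : ∀ v : Fin n,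
        (∑ w, (if (SimpleGraph.turanGraph n r).Adj v w
            then α * x v ^ 2 + (1 - α) * (x v * x w) else 0)) =
        (α * x v ^ 2 * n + (1 - α) * (x v * ∑ u, x u)) -
          (α * x v ^ 2 * ((univ.filter (fun w : Fin n => (w : ℕ) % r = (v : ℕ) % r)).card : ℝ) +
            (1 - α) * (x v * ∑ u ∈ univ.filter (fun w : Fin n => (w : ℕ) % r = (v : ℕ) % r), x u)) := by
      intro v
      have hsplit : ∀ w : Fin n, (if (SimpleGraph.turanGraph n r).Adj v w
            then α * x v ^ 2 + (1 - α) * (x v * x w) else 0) =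
          (α * x v ^ 2 + (1 - α) * (x v * x w)) -
            (if (w : ℕ) % r = (v : ℕ) % r then α * x v ^ 2 + (1 - α) * (x v * x w) else 0) := by
        intro w
        have hiff : (SimpleGraph.turanGraph n r).Adj v w ↔ ¬ ((w : ℕ) % r = (v : ℕ) % r) :=
          ⟨fun h h2 => h h2.symm, fun h h2 => h h2.symm⟩
        by_cases h : (w : ℕ) % r = (v : ℕ) % r
        · rw [if_pos h, if_neg (by simp [hiff, h])]; ring
        · rw [if_pos (hiff.2 h), if_neg h]; ring
      rw [Finset.sum_congr rfl fun w _ => hsplit w, Finset.sum_sub_distrib]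
      congr 1
      · rw [Finset.sum_add_distrib, Finset.sum_const, card_univ, Fintype.card_fin, nsmul_eq_mul]
        simp only [← Finset.mul_sum]
        ring
      · rw [← Finset.sum_filter, Finset.sum_add_distrib, Finset.sum_const, nsmul_eq_mul]
        simp only [← Finset.mul_sum]
        ring
    rw [Finset.sum_congr rfl fun v _ => hrow v, Finset.sum_sub_distrib]
    congr 1
    · rw [Finset.sum_add_distrib]
      congr 1
      · rw [← Finset.sum_mul, ← Finset.mul_sum]
        ring
      · simp only [← Finset.mul_sum]
        rw [← Finset.sum_mul]
        ring
    · rw [← hfib (fun v => α * x v ^ 2 *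
          ((univ.filter (fun w : Fin n => (w : ℕ) % r = (v : ℕ) % r)).card : ℝ) +
          (1 - α) * (x v * ∑ u ∈ univ.filter (fun w : Fin n => (w : ℕ) % r = (v : ℕ) % r), x u))]
      refine Finset.sum_congr rfl fun i hi => ?_
      rw [Finset.sum_congr rfl fun v hv => by rw [hmem i v hv]]
      rw [Finset.sum_add_distrib]
      simp only [← Finset.mul_sum, ← Finset.sum_mul]
      ring
  -- apply core
  have hcore := core r hr n (by exact_mod_cast hn) α h0 h1
    (fun i => ((univ.filter (fun v : Fin n => (v : ℕ) % r = i)).card : ℝ))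
    (fun i => ∑ v ∈ univ.filter (fun v : Fin n => (v : ℕ) % r = i), x v)
    (fun i => ∑ v ∈ univ.filter (fun v : Fin n => (v : ℕ) % r = i), x v ^ 2)
    (fun i => by positivity)
    (by
      rw [show ((n : ℝ)) = ∑ v : Fin n, (1:ℝ) by simp
        ]
      rw [← hfib (fun _ => (1:ℝ))]
      refine Finset.sum_congr rfl fun i _ => ?_
      rw [Finset.sum_const, nsmul_eq_mul, mul_one])
    (fun i => Finset.sum_nonneg fun v _ => sq_nonneg _)
    (fun i _ => by
      have := sq_sum_le_card_mul_sum_sq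
        (s := univ.filter (fun v : Fin n => (v : ℕ) % r = i)) (f := x)
      exact_mod_cast this)
  have hT : x ⬝ᵥ x = ∑ v, x v ^ 2 := by
    simp [dotProduct, sq]
  have hT2 : (∑ v, x v ^ 2) = ∑ i ∈ range r,
      ∑ v ∈ univ.filter (fun v : Fin n => (v : ℕ) % r = i), x v ^ 2 :=
    (hfib _).symm
  have hS2 : (∑ v, x v) = ∑ i ∈ range r,
      ∑ v ∈ univ.filter (fun v : Fin n => (v : ℕ) % r = i), x v :=
    (hfib _).symm
  rw [key, hT, hT2, hS2, Finset.sum_add_distrib]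
  beta_reduce at hcore
  rw [Finset.sum_add_distrib, Finset.sum_add_distrib] at hcore
  have e3 : ∑ i ∈ range r, ((1 - 1/(r:ℝ) - α) * n *
      ∑ v ∈ univ.filter (fun v : Fin n => (v : ℕ) % r = i), x v ^ 2) =
      (1 - 1/(r:ℝ) - α) * n * ∑ i ∈ range r,
        ∑ v ∈ univ.filter (fun v : Fin n => (v : ℕ) % r = i), x v ^ 2 := by
    rw [← Finset.mul_sum]
  rw [e3] at hcore
  linarith [hcore]

theorem lamAlpha_turanGraph_upper (r n : ℕ) (hr : 2 ≤ r) (hn : 1 ≤ n)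
    (α : ℝ) (h0 : 0 ≤ α) (h1 : α ≤ 1 - 1 / r) :
    lamAlpha (SimpleGraph.turanGraph n r) α ≤ (1 - 1 / (r : ℝ)) * n := by
  have hr0 : (0:ℝ) < r := by positivity
  have hrr : (1:ℝ)/r ≤ 1/2 := by
    rw [div_le_div_iff₀ hr0 (by norm_num)]
    have : (2:ℝ) ≤ r := by exact_mod_cast hr
    linarith
  have hc : (0:ℝ) ≤ (1 - 1 / (r : ℝ)) * n := by
    have : (0:ℝ) ≤ (n:ℝ) := by positivity
    nlinarith
  apply Real.sSup_le _ hc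
  intro μ hμ
  set M := Aalpha (SimpleGraph.turanGraph n r) α with hM
  have hex : ∃ x : Fin n → ℝ, x ≠ 0 ∧ M *ᵥ x = μ • x := by
    rw [← AlgEquiv.spectrum_eq (Matrix.toLinAlgEquiv' (R := ℝ) (n := Fin n))] at hμ
    have he : Module.End.HasEigenvalue (Matrix.toLinAlgEquiv' M) μ :=
      Module.End.hasEigenvalue_iff_mem_spectrum.2 hμ
    obtain ⟨v, hv⟩ := he.exists_hasEigenvector
    exact ⟨v, hv.2, by rw [← Matrix.toLinAlgEquiv'_apply, hv.apply_eq_smul]⟩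
  obtain ⟨x, hx0, hx⟩ := hex
  have hpos : 0 < x ⬝ᵥ x := by
    have h2 : 0 ≤ x ⬝ᵥ x := Finset.sum_nonneg fun i _ => mul_self_nonneg _
    rcases h2.lt_or_eq with h3 | h3
    · exact h3
    · exact absurd ((dotProduct_self_eq_zero).1 h3.symm) hx0
  have hquad := turan_quad r n hr hn α h0 h1 x
  rw [← hM, hx] at hquad
  have : μ * (x ⬝ᵥ x) ≤ (1 - 1 / (r : ℝ)) * n * (x ⬝ᵥ x) := by
    calc μ * (x ⬝ᵥ x) = x ⬝ᵥ (μ • x) := by rw [dotProduct_smul]; simp [smul_eq_mul]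
      _ ≤ (1 - 1 / (r : ℝ)) * n * (x ⬝ᵥ x) := hquad
  exact le_of_mul_le_mul_right this hpos
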